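/- Let 1/2 < H < 1 and let c_H := (H − 1/2) · ( 2H Γ(3/2 − H) / ( Γ(H + 1/2) Γ(2 − 2H) ) )^{1/2}, where Γ is the Gamma function. Then for all real numbers 0 < s < t, c_H^2 · t^{H−1/2} s^{H−1/2} ∫_0^s u^{1−2H} (t−u)^{H−3/2} (s−u)^{H−3/2} du = H(2H−1) (t−s)^{2H−2}. Equivalently, writing ∂_1 K_H(t,u) := c_H u^{1/2−H} (t−u)^{H−3/2} t^{H−1/2} for the partial derivative in its first argument of the Volterra kernel K_H of fractional Brownian motion, one has ∫_0^s ∂_1 K_H(t,u) ∂_1 K_H(s,u) du = H(2H−1)(t−s)^{2H−2}. -/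

import Mathlib

open MeasureTheory Real

/-- The constant `c_H` of the Volterra kernel of fractional Brownian motion. -/
noncomputable def cH (H : ℝ) : ℝ :=
  (H - 1 / 2) * (2 * H * Gamma (3 / 2 - H) / (Gamma (H + 1 / 2) * Gamma (2 - 2 * H))) ^ ((1:ℝ) / 2)

/-- For `1/2 < H < 1` and `0 < s < t`,
`c_H^2 t^{H−1/2} s^{H−1/2} ∫_0^s u^{1−2H} (t−u)^{H−3/2} (s−u)^{H−3/2} du
  = H(2H−1)(t−s)^{2H−2}`,
i.e. `∫_0^s ∂₁K_H(t,u) ∂₁K_H(s,u) du = H(2H−1)(t−s)^{2H−2}` where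
`∂₁K_H(t,u) = c_H u^{1/2−H} (t−u)^{H−3/2} t^{H−1/2}`. -/
lemma aux_alg (a b c d w v e1 e2 : ℝ) (ha : 0 < a) (hb : 0 < b) (hc : 0 < c)
    (hd : 0 < d) (hw : 0 < w) (hv : 0 < v) (he : e1 + 2 * e2 + 2 = 0) :
    a * b * c / d ^ 2 * ((a * b * w / d) ^ e1 * (b * c / d) ^ e2 * (a * c * v / d) ^ e2) =
      (a * b) ^ (e1 + e2 + 1) * c ^ (2 * e2 + 1) * (w ^ e1 * v ^ e2) := by
  have h1 : (0:ℝ) < a * b * w / d := by positivity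
  have h2 : (0:ℝ) < b * c / d := by positivity
  have h3 : (0:ℝ) < a * c * v / d := by positivity
  have hab : (0:ℝ) < a * b := by positivity
  have habc : a * b * c / d ^ 2 = exp (log a + log b + log c - 2 * log d) := by
    rw [Real.exp_sub, Real.exp_add, Real.exp_add, Real.exp_log ha, Real.exp_log hb,
      Real.exp_log hc, show (2:ℝ) * log d = ((2:ℕ):ℝ) * log d by norm_num,
      Real.exp_nat_mul, Real.exp_log hd]
  rw [habc, Real.rpow_def_of_pos h1, Real.rpow_def_of_pos h2, Real.rpow_def_of_pos h3,
    Real.rpow_def_of_pos hab, Real.rpow_def_of_pos hc, Real.rpow_def_of_pos hw,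
    Real.rpow_def_of_pos hv,
    Real.log_div (by positivity) hd.ne', Real.log_div (by positivity) hd.ne',
    Real.log_div (by positivity) hd.ne', Real.log_mul (by positivity) hw.ne',
    Real.log_mul (by positivity) hv.ne', Real.log_mul ha.ne' hb.ne',
    Real.log_mul hb.ne' hc.ne', Real.log_mul (by positivity) hc.ne']
  simp only [← Real.exp_add]
  rw [Real.exp_eq_exp]
  have : e1 = -2 - 2 * e2 := by linarith
  subst this
  ring

lemma real_beta {a b : ℝ} (ha : 0 < a) (hb : 0 < b) :
    ∫ x in (0:ℝ)..1, x ^ (a - 1) * (1 - x) ^ (b - 1) =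
      Gamma a * Gamma b / Gamma (a + b) := by
  have key := Complex.Gamma_mul_Gamma_eq_betaIntegral (s := (a:ℂ)) (t := (b:ℂ))
    (by simpa using ha) (by simpa using hb)
  have hβ : Complex.betaIntegral a b =
      ((∫ x in (0:ℝ)..1, x ^ (a - 1) * (1 - x) ^ (b - 1) : ℝ) : ℂ) := by
    rw [Complex.betaIntegral, ← intervalIntegral.integral_ofReal]
    refine intervalIntegral.integral_congr fun x hx => ?_
    rw [Set.uIcc_of_le (by norm_num : (0:ℝ) ≤ 1)] at hx
    obtain ⟨hx0, hx1⟩ := hx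
    rw [show ((a:ℂ) - 1) = ((a - 1 : ℝ) : ℂ) by push_cast; ring,
      show ((b:ℂ) - 1) = ((b - 1 : ℝ) : ℂ) by push_cast; ring,
      show ((1:ℂ) - (x:ℂ)) = ((1 - x : ℝ) : ℂ) by push_cast; ring,
      ← Complex.ofReal_cpow hx0, ← Complex.ofReal_cpow (by linarith : (0:ℝ) ≤ 1 - x),
      ← Complex.ofReal_mul]
  rw [hβ, ← Complex.ofReal_add, Complex.Gamma_ofReal, Complex.Gamma_ofReal,
    Complex.Gamma_ofReal, ← Complex.ofReal_mul, ← Complex.ofReal_mul] at key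
  have := Complex.ofReal_injective key
  have hG : Gamma (a + b) ≠ 0 := (Gamma_pos_of_pos (by linarith)).ne'
  field_simp
  linarith [this]

lemma cov (H s t : ℝ) (hH1 : 1/2 < H) (hH2 : H < 1) (hs : 0 < s) (hst : s < t) :
    ∫ u in (0:ℝ)..s, u ^ (1 - 2 * H) * (t - u) ^ (H - 3 / 2) * (s - u) ^ (H - 3 / 2) =
      (s * t) ^ ((1:ℝ) / 2 - H) * (t - s) ^ (2 * H - 2) *
        ∫ w in (0:ℝ)..1, w ^ (1 - 2 * H) * (1 - w) ^ (H - 3 / 2) := by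
  have hts : 0 < t - s := by linarith
  have ht : 0 < t := by linarith
  set φ : ℝ → ℝ := fun w => s * t * w / (t - s + s * w) with hφ
  set φd : ℝ → ℝ := fun w => s * t * (t - s) / (t - s + s * w) ^ 2 with hφd
  have hD : ∀ w ∈ Set.Ioo (0:ℝ) 1, 0 < t - s + s * w := by
    intro w hw; nlinarith [hw.1]
  -- image
  have himg : φ '' Set.Ioo 0 1 = Set.Ioo 0 s := by
    ext u
    constructor
    · rintro ⟨w, hw, rfl⟩
      have hDw := hD w hw
      obtain ⟨hw0, hw1⟩ := hw
      constructor
      · have : 0 < s * t * w := by positivity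
        simp only [hφ]; positivity
      · simp only [hφ]
        rw [div_lt_iff₀ hDw]
        nlinarith [mul_pos (mul_pos hs hts) (sub_pos.2 hw1)]
    · rintro ⟨hu0, hus⟩
      have htu : 0 < t - u := by linarith
      refine ⟨u * (t - s) / (s * (t - u)), ⟨?_, ?_⟩, ?_⟩
      · exact div_pos (mul_pos hu0 hts) (mul_pos hs htu)
      · rw [div_lt_one (mul_pos hs htu)]; nlinarith
      · have hden : t - s + s * (u * (t - s) / (s * (t - u))) = (t - s) * t / (t - u) := by
          field_simp; ring
        simp only [hφ]
        rw [hden]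
        rw [div_eq_iff (by positivity : (t - s) * t / (t - u) ≠ 0)]
        field_simp
  -- derivative
  have hderiv : ∀ w ∈ Set.Ioo (0:ℝ) 1,
      HasDerivWithinAt φ (φd w) (Set.Ioo 0 1) w := by
    intro w hw
    have hDw := hD w hw
    have h1 : HasDerivAt (fun w : ℝ => s * t * w) (s * t) w := by
      simpa using (hasDerivAt_id w).const_mul (s * t)
    have h2 : HasDerivAt (fun w : ℝ => t - s + s * w) s w := by
      simpa using ((hasDerivAt_id w).const_mul s).const_add (t - s)
    have := (h1.div h2 hDw.ne')
    refine this.hasDerivWithinAt.congr_deriv ?_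
    simp only [hφd]
    field_simp
    ring
  -- injectivity
  have hinj : Set.InjOn φ (Set.Ioo 0 1) := by
    intro a ha b hb hab
    have hDa := hD a ha
    have hDb := hD b hb
    simp only [hφ, div_eq_div_iff hDa.ne' hDb.ne'] at hab
    have h0 : s * t * (t - s) * (a - b) = 0 := by nlinarith [hab]
    have hne : s * t * (t - s) ≠ 0 := by positivity
    rcases mul_eq_zero.1 h0 with h | h
    · exact absurd h hne
    · linarith
  rw [intervalIntegral.integral_of_le hs.le, intervalIntegral.integral_of_le zero_le_one,
    MeasureTheory.integral_Ioc_eq_integral_Ioo, MeasureTheory.integral_Ioc_eq_integral_Ioo,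
    ← himg,
    integral_image_eq_integral_abs_deriv_smul measurableSet_Ioo hderiv hinj,
    mul_assoc, ← MeasureTheory.integral_const_mul, ← MeasureTheory.integral_const_mul]
  apply setIntegral_congr_fun measurableSet_Ioo
  intro w hw
  obtain ⟨hw0, hw1⟩ := hw
  have hDw : 0 < t - s + s * w := by nlinarith
  have h1w : 0 < 1 - w := by linarith
  have hphit : t - φ w = t * (t - s) / (t - s + s * w) := by
    simp only [hφ]; field_simp; ring
  have hphis : s - φ w = s * (t - s) * (1 - w) / (t - s + s * w) := by
    simp only [hφ]; field_simp; ring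
  have habs : |φd w| = s * t * (t - s) / (t - s + s * w) ^ 2 := by
    simp only [hφd]; rw [abs_of_pos]; positivity
  simp only
  rw [smul_eq_mul, habs, hphit, hphis]
  have := aux_alg s t (t - s) (t - s + s * w) w (1 - w) (1 - 2 * H) (H - 3 / 2)
    hs ht hts hDw hw0 h1w (by ring)
  simp only [hφ]
  rw [this, show 1 - 2 * H + (H - 3 / 2) + 1 = (1:ℝ) / 2 - H by ring,
    show 2 * (H - 3 / 2) + 1 = 2 * H - 2 by ring]
  ring

theorem volterra_kernel_derivative_integral
    (H : ℝ) (hH1 : 1 / 2 < H) (hH2 : H < 1)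
    (s t : ℝ) (hs : 0 < s) (hst : s < t) :
    cH H ^ 2 * t ^ (H - 1 / 2) * s ^ (H - 1 / 2) *
      ∫ u in (0:ℝ)..s, u ^ (1 - 2 * H) * (t - u) ^ (H - 3 / 2) * (s - u) ^ (H - 3 / 2) =
    H * (2 * H - 1) * (t - s) ^ (2 * H - 2) := by
  have ht : 0 < t := by linarith
  have hts : 0 < t - s := by linarith
  have hG1 : 0 < Gamma (H - 1 / 2) := Gamma_pos_of_pos (by linarith)
  have hG2 : 0 < Gamma (2 - 2 * H) := Gamma_pos_of_pos (by linarith)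
  have hG3 : 0 < Gamma (3 / 2 - H) := Gamma_pos_of_pos (by linarith)
  rw [cov H s t hH1 hH2 hs hst,
    show (1 : ℝ) - 2 * H = (2 - 2 * H) - 1 by ring,
    show H - 3 / 2 = (H - 1 / 2) - 1 by ring,
    real_beta (by linarith : (0:ℝ) < 2 - 2 * H) (by linarith : (0:ℝ) < H - 1 / 2),
    show (2 - 2 * H) + (H - 1 / 2) = 3 / 2 - H by ring]
  have hcH : cH H ^ 2 =
      (H - 1 / 2) ^ 2 * (2 * H * Gamma (3 / 2 - H) /
        (((H - 1 / 2) * Gamma (H - 1 / 2)) * Gamma (2 - 2 * H))) := by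
    rw [cH, mul_pow, show H + 1 / 2 = (H - 1 / 2) + 1 by ring,
      Real.Gamma_add_one (by intro h; rw [sub_eq_zero] at h; linarith)]
    congr 1
    have h0 : (0:ℝ) < H := by linarith
    have h1 : (0:ℝ) < H - 1/2 := by linarith
    have hX : (0:ℝ) ≤ 2 * H * Gamma (3 / 2 - H) /
        ((H - 1 / 2) * Gamma (H - 1 / 2) * Gamma (2 - 2 * H)) := by positivity
    rw [← Real.rpow_natCast (_ ^ ((1:ℝ)/2)) 2, ← Real.rpow_mul hX]
    norm_num
  have hss : s ^ (H - 1 / 2) * s ^ ((1:ℝ) / 2 - H) = 1 := by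
    rw [← Real.rpow_add hs]; norm_num
  have htt : t ^ (H - 1 / 2) * t ^ ((1:ℝ) / 2 - H) = 1 := by
    rw [← Real.rpow_add ht]; norm_num
  have expand : cH H ^ 2 * t ^ (H - 1/2) * s ^ (H - 1/2) *
      ((s * t) ^ ((1:ℝ)/2 - H) * (t - s) ^ (2*H - 2) *
        (Gamma (2 - 2*H) * Gamma (H - 1/2) / Gamma (3/2 - H))) =
      (cH H ^ 2 * (Gamma (2 - 2*H) * Gamma (H - 1/2) / Gamma (3/2 - H))) *
        (s ^ (H - 1/2) * s ^ ((1:ℝ)/2 - H)) * (t ^ (H - 1/2) * t ^ ((1:ℝ)/2 - H)) *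
        (t - s) ^ (2*H - 2) := by
    rw [Real.mul_rpow hs.le ht.le]; ring
  rw [expand, hss, htt, mul_one, mul_one]
  have : cH H ^ 2 * (Gamma (2 - 2*H) * Gamma (H - 1/2) / Gamma (3/2 - H)) = H * (2*H - 1) := by
    have hH : H - 1/2 ≠ 0 := by intro h; rw [sub_eq_zero] at h; linarith
    have hne : (H - 1/2) * Gamma (H - 1/2) * Gamma (2 - 2*H) * Gamma (3/2 - H) ≠ 0 :=
      mul_ne_zero (mul_ne_zero (mul_ne_zero hH hG1.ne') hG2.ne') hG3.ne'
    rw [hcH, mul_assoc, div_mul_div_comm, mul_div_assoc', div_eq_iff hne]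
    ring
  rw [this]
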